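/- arXiv:1711.08854 — 4 statements merged into one kernel-verified Lean document; each statement's English description precedes it below -/
import Mathlib

section
/- Let a ∈ ℚ with 0 < a < 1. Let F_a ∈ ℚ[[X]] denote the hypergeometric series ₂F₁(a, 1−a; 1; λ), i.e. F_a = Σ_{i≥0} ((a)_i (1−a)_i / (i!)²) X^i. For i ≥ 1 set K_{a,i} = Σ_{k=1}^{i} ( 2/k − 1/(k−a) − 1/(k−1+a) ), and let G_a = Σ_{i≥1} K_{a,i} ((a)_i (1−a)_i / (i!)²) X^i ∈ ℚ[[X]]. Then, in ℚ[[X]], writing ' for the formal derivative: X(1−X)·(G_a′·F_a − G_a·F_a′) = (1−X)·F_a² − 1. (This is the formal content of the paper's Lemma stating that τ_n(λ) = −log λ + κ_n + G_a/F_a with a = n/N satisfies λ·dτ_n/dλ = −(1−λ)^{−1} F_a(λ)^{−2}.) -/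
open PowerSeries

/-- The hypergeometric series `₂F₁(a, 1-a; 1; X) ∈ ℚ[[X]]`. -/
noncomputable def hypF (a : ℚ) : PowerSeries ℚ :=
  PowerSeries.mk fun i =>
    (ascPochhammer ℚ i).eval a * (ascPochhammer ℚ i).eval (1 - a) / ((i.factorial : ℚ)) ^ 2

/-- `K_{a,i} = Σ_{k=1}^{i} (2/k - 1/(k-a) - 1/(k-1+a))`. -/
noncomputable def Kcoef (a : ℚ) (i : ℕ) : ℚ :=
  ∑ k ∈ Finset.Icc 1 i, (2 / (k : ℚ) - 1 / ((k : ℚ) - a) - 1 / ((k : ℚ) - 1 + a))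

/-- `G_a = Σ_{i ≥ 1} K_{a,i}·((a)_i (1-a)_i / (i!)²)·X^i ∈ ℚ[[X]]`. -/
noncomputable def hypG (a : ℚ) : PowerSeries ℚ :=
  PowerSeries.mk fun i =>
    Kcoef a i * ((ascPochhammer ℚ i).eval a * (ascPochhammer ℚ i).eval (1 - a)
      / ((i.factorial : ℚ)) ^ 2)

/-- The coefficient of `X^i` in `hypF a`. -/
noncomputable def cA (a : ℚ) (i : ℕ) : ℚ :=
  (ascPochhammer ℚ i).eval a * (ascPochhammer ℚ i).eval (1 - a) / ((i.factorial : ℚ)) ^ 2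

lemma coeff_hypF (a : ℚ) (i : ℕ) : PowerSeries.coeff i (hypF a) = cA a i := by
  simp [hypF, cA]

lemma coeff_hypG (a : ℚ) (i : ℕ) :
    PowerSeries.coeff i (hypG a) = Kcoef a i * cA a i := by
  simp [hypG, cA]

lemma cA_zero (a : ℚ) : cA a 0 = 1 := by simp [cA]

lemma Kcoef_zero (a : ℚ) : Kcoef a 0 = 0 := by simp [Kcoef]

lemma Kcoef_succ (a : ℚ) (i : ℕ) :
    Kcoef a (i + 1) = Kcoef a i +
      (2 / ((i : ℚ) + 1) - 1 / (((i : ℚ) + 1) - a) - 1 / ((i : ℚ) + a)) := by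
  unfold Kcoef
  rw [← Finset.insert_Icc_right_eq_Icc_add_one (by omega), Finset.sum_insert (by simp)]
  push_cast
  ring

lemma cA_succ (a : ℚ) (i : ℕ) :
    ((i : ℚ) + 1) ^ 2 * cA a (i + 1) = (a + i) * (1 - a + i) * cA a i := by
  unfold cA
  simp only [ascPochhammer_succ_right]
  have hfac : ((i.factorial : ℚ)) ≠ 0 := Nat.cast_ne_zero.mpr i.factorial_ne_zero
  have h1 : ((i : ℚ) + 1) ≠ 0 := by positivity
  simp only [Nat.factorial_succ, Polynomial.eval_mul, Polynomial.eval_add, Polynomial.eval_X,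
    Polynomial.eval_natCast, Nat.cast_mul]
  field_simp
  push_cast
  ring

lemma gA_succ (a : ℚ) (ha0 : 0 < a) (ha1 : a < 1) (i : ℕ) :
    ((i : ℚ) + 1) ^ 2 * (Kcoef a (i + 1) * cA a (i + 1))
      = (a + i) * (1 - a + i) * (Kcoef a i * cA a i)
        + 2 * ((i : ℚ) + 1) * cA a (i + 1) - (2 * i + 1) * cA a i := by
  have h1 : ((i : ℚ) + 1) ≠ 0 := by positivity
  have h2 : ((i : ℚ) + 1) - a ≠ 0 := by
    have : (0 : ℚ) ≤ (i : ℚ) := Nat.cast_nonneg i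
    nlinarith
  have h3 : ((i : ℚ) + a) ≠ 0 := by positivity
  have hc' : cA a (i + 1) = (a + i) * (1 - a + i) * cA a i / ((i : ℚ) + 1) ^ 2 := by
    field_simp
    linear_combination cA_succ a i
  rw [Kcoef_succ, hc']
  field_simp
  ring

/-- The hypergeometric ODE for `F`, rearranged with no subtractions:
`X F'' + F' = X² F'' + 2 X F' + a(1-a) F`. -/
lemma odeF (a : ℚ) :
    PowerSeries.X * (d⁄dX ℚ (d⁄dX ℚ (hypF a))) + d⁄dX ℚ (hypF a)
      = PowerSeries.X * (PowerSeries.X * (d⁄dX ℚ (d⁄dX ℚ (hypF a))))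
        + PowerSeries.C 2 * (PowerSeries.X * d⁄dX ℚ (hypF a))
        + PowerSeries.C (a * (1 - a)) * hypF a := by
  ext n
  rcases n with _ | n
  · simp only [map_add, coeff_zero_X_mul, coeff_C_mul, coeff_derivative, coeff_hypF,
      zero_add, mul_zero, add_zero]
    have := cA_succ a 0
    push_cast at this ⊢
    linarith [this]
  · simp only [map_add, coeff_succ_X_mul, coeff_C_mul, coeff_derivative, coeff_hypF]
    rcases n with _ | n
    · simp only [coeff_zero_X_mul, coeff_derivative, coeff_hypF]
      have := cA_succ a 1
      push_cast at this ⊢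
      linarith [this]
    · simp only [coeff_succ_X_mul, coeff_C_mul, coeff_derivative, coeff_hypF]
      have := cA_succ a (n + 2)
      push_cast at this ⊢
      nlinarith [this]

/-- The inhomogeneous ODE for `G`:
`X G'' + G' + F + 2 X F' = X² G'' + 2 X G' + a(1-a) G + 2 F'`. -/
lemma odeG (a : ℚ) (ha0 : 0 < a) (ha1 : a < 1) :
    PowerSeries.X * (d⁄dX ℚ (d⁄dX ℚ (hypG a))) + d⁄dX ℚ (hypG a) + hypF a
        + PowerSeries.C 2 * (PowerSeries.X * d⁄dX ℚ (hypF a))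
      = PowerSeries.X * (PowerSeries.X * (d⁄dX ℚ (d⁄dX ℚ (hypG a))))
        + PowerSeries.C 2 * (PowerSeries.X * d⁄dX ℚ (hypG a))
        + PowerSeries.C (a * (1 - a)) * hypG a
        + PowerSeries.C 2 * d⁄dX ℚ (hypF a) := by
  ext n
  rcases n with _ | n
  · simp only [map_add, coeff_zero_X_mul, coeff_C_mul, coeff_derivative, coeff_hypF,
      coeff_hypG, zero_add, mul_zero, add_zero, Kcoef_zero, cA_zero]
    have := gA_succ a ha0 ha1 0
    push_cast at this ⊢
    rw [Kcoef_zero, cA_zero] at this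
    linarith [this]
  · simp only [map_add, coeff_succ_X_mul, coeff_C_mul, coeff_derivative, coeff_hypF, coeff_hypG]
    rcases n with _ | n
    · simp only [coeff_zero_X_mul, coeff_derivative, coeff_hypF, coeff_hypG]
      have := gA_succ a ha0 ha1 1
      push_cast at this ⊢
      linarith [this]
    · simp only [coeff_succ_X_mul, coeff_C_mul, coeff_derivative, coeff_hypF, coeff_hypG]
      have := gA_succ a ha0 ha1 (n + 2)
      push_cast at this ⊢
      nlinarith [this]

/-- `X(1-X)(G_a′ F_a - G_a F_a′) = (1-X) F_a² - 1` in `ℚ[[X]]`. -/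
theorem hypG_wronskian (a : ℚ) (ha0 : 0 < a) (ha1 : a < 1) :
    PowerSeries.X * (1 - PowerSeries.X) *
        ((d⁄dX ℚ (hypG a)) * hypF a - hypG a * (d⁄dX ℚ (hypF a)))
      = (1 - PowerSeries.X) * (hypF a) ^ 2 - 1 := by
  apply PowerSeries.derivative.ext
  · have hA := odeF a
    have hB := odeG a ha0 ha1
    have h2 : (PowerSeries.C (R := ℚ)) 2 = (2 : PowerSeries ℚ) := map_ofNat _ 2
    rw [h2] at hA hB
    simp only [Derivation.leibniz, smul_eq_mul, map_sub, map_add, derivative_X,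
      Derivation.map_one_eq_zero, pow_two]
    linear_combination (hypF a) * hB - (hypG a) * hA
  · simp [hypF, hypG, Kcoef, PowerSeries.coeff_zero_eq_constantCoeff, map_sub, map_mul]
end

section
/- Let a ∈ ℝ with 0 < a < 1, and let F_a : (−1,1) → ℝ be the (convergent) hypergeometric series F_a(λ) = Σ_{i≥0} ((a)_i (1−a)_i / (i!)²) λ^i, with derivative F_a′. Then for every λ ∈ (0,1): λ(1−λ)·( F_a′(λ)·F_a(1−λ) + F_a(λ)·F_a′(1−λ) ) = sin(πa)/π. In particular this function of λ is constant on (0,1), with constant value 1/B(a,1−a) = sin(πa)/π. -/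
/-- The (convergent, for `|x| < 1`) hypergeometric function
`₂F₁(a, 1-a; 1; x) = Σ_{i≥0} ((a)_i (1-a)_i / (i!)²) x^i` as a real function. -/
noncomputable def hypFR (a : ℝ) (x : ℝ) : ℝ :=
  ∑' i : ℕ,
    ((ascPochhammer ℝ i).eval a * (ascPochhammer ℝ i).eval (1 - a)
      / ((i.factorial : ℝ)) ^ 2) * x ^ i

open Filter Topology

noncomputable def hc (a : ℝ) (i : ℕ) : ℝ :=
  (ascPochhammer ℝ i).eval a * (ascPochhammer ℝ i).eval (1 - a) / ((i.factorial : ℝ)) ^ 2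

lemma poch_succ (a : ℝ) (i : ℕ) :
    (ascPochhammer ℝ (i+1)).eval a = (ascPochhammer ℝ i).eval a * (a + i) := by
  rw [ascPochhammer_succ_right]
  simp [Polynomial.eval_mul]

lemma hc_zero (a : ℝ) : hc a 0 = 1 := by simp [hc]

lemma hc_succ (a : ℝ) (i : ℕ) :
    hc a (i+1) * ((i:ℝ)+1)^2 = (a + i) * ((1-a) + i) * hc a i := by
  have hf : ((i.factorial : ℝ)) ≠ 0 := Nat.cast_ne_zero.2 (Nat.factorial_ne_zero i)
  have hf1 : (((i+1).factorial : ℝ)) = ((i:ℝ)+1) * i.factorial := by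
    rw [Nat.factorial_succ]; push_cast; ring
  rw [hc, hc, poch_succ, poch_succ, hf1]
  field_simp

lemma poch_eval_prod (x : ℝ) (n : ℕ) :
    (ascPochhammer ℝ n).eval x = ∏ j ∈ Finset.range n, (x + j) := by
  induction n with
  | zero => simp
  | succ n ih => rw [poch_succ, ih, Finset.prod_range_succ]

lemma poch_pos {x : ℝ} (hx : 0 < x) (n : ℕ) : 0 < (ascPochhammer ℝ n).eval x := by
  rw [poch_eval_prod]
  exact Finset.prod_pos fun j _ => by positivity

variable {a : ℝ}

lemma hc_pos (ha0 : 0 < a) (ha1 : a < 1) (i : ℕ) : 0 < hc a i := by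
  have h1 : (0:ℝ) < 1 - a := by linarith
  have := poch_pos ha0 i
  have := poch_pos h1 i
  have : (0:ℝ) < (i.factorial : ℝ) := by positivity
  unfold hc; positivity

lemma hc_succ' (a : ℝ) (i : ℕ) :
    hc a (i+1) = (a + i) * ((1-a) + i) / ((i:ℝ)+1)^2 * hc a i := by
  have h : ((i:ℝ)+1)^2 ≠ 0 := by positivity
  field_simp
  rw [hc_succ]

lemma hc_antitone (ha0 : 0 < a) (ha1 : a < 1) (i : ℕ) : hc a (i+1) ≤ hc a i := by
  rw [hc_succ']
  have hle : (a + i) * ((1-a) + i) ≤ ((i:ℝ)+1)^2 := by nlinarith [sq_nonneg (a - 1/2)]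
  have h2 : (0:ℝ) < ((i:ℝ)+1)^2 := by positivity
  calc (a + i) * ((1-a) + i) / ((i:ℝ)+1)^2 * hc a i
      ≤ 1 * hc a i := by
        apply mul_le_mul_of_nonneg_right _ (hc_pos ha0 ha1 i).le
        rw [div_le_one h2]; exact hle
    _ = hc a i := one_mul _

lemma hc_le_one (ha0 : 0 < a) (ha1 : a < 1) (i : ℕ) : hc a i ≤ 1 := by
  induction i with
  | zero => rw [hc_zero]
  | succ n ih => exact (hc_antitone ha0 ha1 n).trans ih

lemma hc_mono_mul (ha0 : 0 < a) (ha1 : a < 1) (i : ℕ) :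
    ((i:ℝ)+1) * hc a (i+1) ≤ ((i:ℝ)+2) * hc a (i+2) := by
  have h1 : hc a (i+2) = (a + (i+1)) * ((1-a) + (i+1)) / ((i:ℝ)+1+1)^2 * hc a (i+1) := by
    have := hc_succ' a (i+1); push_cast at this ⊢; linarith [this]
  rw [h1]
  have hp := hc_pos ha0 ha1 (i+1)
  have key : ((i:ℝ)+1) ≤ (a + (i+1)) * ((1-a) + (i+1)) * ((i:ℝ)+2) / ((i:ℝ)+1+1)^2 := by
    rw [le_div_iff₀ (by positivity)]
    nlinarith [mul_pos ha0 (by linarith : (0:ℝ) < 1 - a)]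
  have he : ((i:ℝ)+2) * ((a + (i+1)) * ((1-a) + (i+1)) / ((i:ℝ)+1+1)^2 * hc a (i+1))
      = ((a + (i+1)) * ((1-a) + (i+1)) * ((i:ℝ)+2) / ((i:ℝ)+1+1)^2) * hc a (i+1) := by ring
  rw [he]
  exact mul_le_mul_of_nonneg_right key hp.le


lemma key_eq {a : ℝ} (ha0 : 0 < a) (ha1 : a < 1) (n : ℕ) (hn : 1 ≤ n) :
    ((n:ℝ)+1) * hc a (n+1)
      = ((n:ℝ)/((n:ℝ)+1)) * (Real.GammaSeq a n * Real.GammaSeq (1-a) n)⁻¹ := by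
  have hn0 : (0:ℝ) < n := by exact_mod_cast hn
  have hPa : (0:ℝ) < ∏ j ∈ Finset.range (n+1), (a + j) :=
    Finset.prod_pos fun j _ => by positivity
  have hPb : (0:ℝ) < ∏ j ∈ Finset.range (n+1), ((1-a) + j) :=
    Finset.prod_pos fun j _ => by
      have h1 : (0:ℝ) < 1 - a := by linarith
      positivity
  have hra : (0:ℝ) < (n:ℝ) ^ a := Real.rpow_pos_of_pos hn0 _
  have hrb : (0:ℝ) < (n:ℝ) ^ (1-a) := Real.rpow_pos_of_pos hn0 _
  have hr : (n:ℝ)^a * (n:ℝ)^(1-a) = n := by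
    rw [← Real.rpow_add hn0, show a + (1-a) = 1 by ring, Real.rpow_one]
  have hfacp : (0:ℝ) < (n.factorial : ℝ) := by positivity
  have hfac : (((n+1).factorial : ℝ)) = ((n:ℝ)+1) * (n.factorial:ℝ) := by
    rw [Nat.factorial_succ]; push_cast; ring
  unfold hc
  rw [poch_eval_prod, poch_eval_prod, Real.GammaSeq, Real.GammaSeq, hfac,
    div_mul_div_comm, inv_div]
  have hx : (n:ℝ)^a * (n.factorial:ℝ) * ((n:ℝ)^(1-a) * (n.factorial:ℝ))
      = (n:ℝ) * (n.factorial:ℝ)^2 := by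
    rw [show (n:ℝ)^a * (n.factorial:ℝ) * ((n:ℝ)^(1-a) * (n.factorial:ℝ))
        = ((n:ℝ)^a * (n:ℝ)^(1-a)) * (n.factorial:ℝ)^2 by ring, hr]
  rw [hx]
  field_simp

lemma sin_pi_a_pos {a : ℝ} (ha0 : 0 < a) (ha1 : a < 1) : 0 < Real.sin (Real.pi * a) :=
  Real.sin_pos_of_pos_of_lt_pi (by positivity)
    (by nlinarith [Real.pi_pos])

lemma tendsto_succ_mul_hc {a : ℝ} (ha0 : 0 < a) (ha1 : a < 1) :
    Tendsto (fun n : ℕ => ((n:ℝ)+1) * hc a (n+1)) atTop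
      (𝓝 (Real.sin (Real.pi * a) / Real.pi)) := by
  have hs := sin_pi_a_pos ha0 ha1
  have hG : Real.Gamma a * Real.Gamma (1-a) = Real.pi / Real.sin (Real.pi * a) :=
    Real.Gamma_mul_Gamma_one_sub a
  have hGne : Real.Gamma a * Real.Gamma (1-a) ≠ 0 := by
    rw [hG]; positivity
  have h1 : Tendsto (fun n : ℕ => ((n:ℝ)/((n:ℝ)+1)) *
      (Real.GammaSeq a n * Real.GammaSeq (1-a) n)⁻¹) atTop
      (𝓝 (1 * (Real.Gamma a * Real.Gamma (1-a))⁻¹)) := by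
    exact (tendsto_natCast_div_add_atTop (1:ℝ)).mul
      (((Real.GammaSeq_tendsto_Gamma a).mul (Real.GammaSeq_tendsto_Gamma (1-a))).inv₀ hGne)
  have h2 : 1 * (Real.Gamma a * Real.Gamma (1-a))⁻¹ = Real.sin (Real.pi * a) / Real.pi := by
    rw [hG, one_mul, inv_div]
  rw [h2] at h1
  apply h1.congr'
  filter_upwards [eventually_ge_atTop 1] with n hn
  exact (key_eq ha0 ha1 n hn).symm


lemma abel_aux (d : ℕ → ℝ) (L M : ℝ) (hM : ∀ i, |d i| ≤ M)
    (hL : Tendsto d atTop (𝓝 L)) :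
    Tendsto (fun x => (1 - x) * ∑' i, d i * x ^ i) (𝓝[<] (1:ℝ)) (𝓝 L) := by
  set e : ℕ → ℝ := fun i => d i - (if i = 0 then 0 else d (i - 1)) with he
  have hpart : ∀ n : ℕ, ∑ i ∈ Finset.range n, e i = if n = 0 then 0 else d (n-1) := by
    intro n
    induction n with
    | zero => simp
    | succ n ih =>
      rw [Finset.sum_range_succ, ih, he]
      rcases Nat.eq_zero_or_pos n with h | h
      · simp [h]
      · have : n ≠ 0 := Nat.pos_iff_ne_zero.mp h
        simp [this]
  have hps : Tendsto (fun n => ∑ i ∈ Finset.range n, e i) atTop (𝓝 L) := by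
    have h1 : Tendsto (fun n : ℕ => d (n - 1)) atTop (𝓝 L) :=
      hL.comp (tendsto_sub_atTop_nat 1)
    apply h1.congr'
    filter_upwards [eventually_ge_atTop 1] with n hn
    rw [hpart n, if_neg (by omega)]
  have habel := Real.tendsto_tsum_powerSeries_nhdsWithin_lt hps
  apply habel.congr'
  filter_upwards [Ioo_mem_nhdsLT_of_mem (by norm_num : (1:ℝ) ∈ Set.Ioc 0 1)] with x hx
  have hx1 : |x| < 1 := by
    rw [abs_lt]; constructor <;> [linarith [hx.1]; exact hx.2]
  have hsum : Summable (fun i => d i * x ^ i) := by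
    apply Summable.of_norm_bounded (g := fun i => M * |x| ^ i)
      ((summable_geometric_of_lt_one (abs_nonneg x) hx1).mul_left M)
    intro i
    rw [norm_mul, norm_pow, Real.norm_eq_abs, Real.norm_eq_abs]
    exact mul_le_mul_of_nonneg_right (hM i) (by positivity)
  have hsum2 : Summable (fun i => (if i = 0 then 0 else d (i-1)) * x ^ i) := by
    apply Summable.of_norm_bounded (g := fun i => M * |x| ^ i)
      ((summable_geometric_of_lt_one (abs_nonneg x) hx1).mul_left M)
    intro i
    rw [norm_mul, norm_pow, Real.norm_eq_abs, Real.norm_eq_abs]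
    apply mul_le_mul_of_nonneg_right _ (by positivity)
    rcases eq_or_ne i 0 with h | h
    · simp [h]
      calc (0:ℝ) ≤ |d 0| := abs_nonneg _
        _ ≤ M := hM 0
    · simp [h]; exact hM _
  have hshift : ∑' i, (if i = 0 then 0 else d (i-1)) * x ^ i = x * ∑' i, d i * x ^ i := by
    have h0 : (if (0:ℕ) = 0 then (0:ℝ) else d (0-1)) * x ^ 0 = 0 := by simp
    rw [Summable.tsum_eq_zero_add hsum2, h0, zero_add, ← tsum_mul_left]
    apply tsum_congr
    intro b
    simp only [Nat.succ_ne_zero, if_false, Nat.add_sub_cancel]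
    ring
  have : ∑' i, e i * x ^ i = (1 - x) * ∑' i, d i * x ^ i := by
    have : ∀ i, e i * x ^ i = d i * x ^ i - (if i = 0 then 0 else d (i-1)) * x ^ i := by
      intro i; rw [he]; ring
    rw [tsum_congr this, Summable.tsum_sub hsum hsum2, hshift]
    ring
  exact this


lemma summable_geom_shift (k : ℕ) {r : ℝ} (h0 : 0 ≤ r) (h1 : r < 1) :
    Summable (fun i : ℕ => ((i:ℝ)+1)^k * r^i) := by
  rcases eq_or_lt_of_le h0 with h | h
  · apply summable_of_ne_finset_zero (s := Finset.range 1)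
    intro i hi
    have : i ≠ 0 := by simpa using hi
    rw [← h, zero_pow this, mul_zero]
  · have hs := summable_pow_mul_geometric_of_norm_lt_one (R := ℝ) k
      (r := r) (by rwa [Real.norm_eq_abs, abs_of_pos h])
    have h2 : Summable (fun i : ℕ => ((i+1:ℕ):ℝ)^k * r^(i+1)) :=
      (summable_nat_add_iff 1).mpr hs
    have h3 := h2.mul_left r⁻¹
    apply h3.congr
    intro i
    push_cast
    rw [pow_succ]
    field_simp

lemma hasDerivAt_tsum_geom (d : ℕ → ℝ) (M : ℝ) (hd : ∀ i, |d i| ≤ M) {x : ℝ}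
    (hx : |x| < 1) :
    HasDerivAt (fun y => ∑' i, d i * y ^ i) (∑' i : ℕ, ((i:ℝ)+1) * d (i+1) * x ^ i) x := by
  set r : ℝ := (1 + |x|) / 2 with hr
  have hr0 : 0 < r := by positivity
  have hrx : |x| < r := by rw [hr]; linarith
  have hr1 : r < 1 := by rw [hr]; linarith
  have hM0 : 0 ≤ M := (abs_nonneg _).trans (hd 0)
  have hu : Summable (fun i : ℕ => M / r * (((i:ℝ)+1)^1 * r ^ i)) :=
    (summable_geom_shift 1 hr0.le hr1).mul_left (M / r)
  have hbound : ∀ (i : ℕ) (y : ℝ), y ∈ Set.Ioo (-r) r →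
      ‖d i * ((i:ℝ) * y^(i-1))‖ ≤ M / r * (((i:ℝ)+1)^1 * r ^ i) := by
    intro i y hy
    have hyr : |y| ≤ r := by rw [abs_le]; exact ⟨hy.1.le, hy.2.le⟩
    rw [Real.norm_eq_abs, abs_mul, abs_mul, abs_pow]
    rcases Nat.eq_zero_or_pos i with h | h
    · subst h; simp; positivity
    · have h1 : |y|^(i-1) ≤ r^(i-1) := pow_le_pow_left₀ (abs_nonneg y) hyr _
      have h2 : |((i:ℝ))| = (i:ℝ) := abs_of_nonneg (Nat.cast_nonneg i)
      rw [h2]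
      have h3 : |d i| * ((i:ℝ) * |y|^(i-1)) ≤ M * ((i:ℝ) * r^(i-1)) := by
        apply mul_le_mul (hd i) _ (by positivity) hM0
        exact mul_le_mul_of_nonneg_left h1 (Nat.cast_nonneg i)
      refine h3.trans ?_
      have hpow : r ^ (i-1) * r = r ^ i := by
        rw [← pow_succ]; congr 1; omega
      have h4 : (i:ℝ) * r^(i-1) ≤ ((i:ℝ)+1) * r^i / r := by
        rw [le_div_iff₀ hr0]
        nlinarith [pow_pos hr0 i, pow_nonneg hr0.le (i-1), Nat.cast_nonneg (α := ℝ) i]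
      calc M * ((i:ℝ) * r^(i-1)) ≤ M * (((i:ℝ)+1) * r^i / r) :=
            mul_le_mul_of_nonneg_left h4 hM0
        _ = M / r * (((i:ℝ)+1)^1 * r ^ i) := by ring
  have h0mem : (0:ℝ) ∈ Set.Ioo (-r) r := ⟨by linarith, by linarith⟩
  have hxmem : x ∈ Set.Ioo (-r) r := by
    have := abs_lt.mp hrx; exact ⟨this.1, this.2⟩
  have hg0 : Summable (fun i : ℕ => d i * (0:ℝ) ^ i) := by
    apply summable_of_ne_finset_zero (s := Finset.range 1)
    intro i hi
    have : i ≠ 0 := by simpa using hi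
    rw [zero_pow this, mul_zero]
  have key : HasDerivAt (fun y => ∑' i, d i * y ^ i)
      (∑' i, d i * ((i:ℝ) * x ^ (i-1))) x :=
    hasDerivAt_tsum_of_isPreconnected hu (isOpen_Ioo (a := -r) (b := r))
      ((convex_Ioo _ _).isPreconnected)
      (fun i y _ => (hasDerivAt_pow i y).const_mul (d i))
      hbound h0mem hg0 hxmem
  have hsum : Summable (fun i => d i * ((i:ℝ) * x ^ (i-1))) :=
    Summable.of_norm_bounded hu (fun i => hbound i x hxmem)
  have heq : ∑' i, d i * ((i:ℝ) * x ^ (i-1)) = ∑' i : ℕ, ((i:ℝ)+1) * d (i+1) * x ^ i := by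
    rw [Summable.tsum_eq_zero_add hsum]
    simp only [Nat.cast_zero, zero_mul, mul_zero, zero_add]
    apply tsum_congr
    intro i
    push_cast [Nat.add_sub_cancel]
    ring
  rw [heq] at key
  exact key



noncomputable def hDx (a x : ℝ) : ℝ := ∑' i : ℕ, ((i:ℝ)+1) * hc a (i+1) * x ^ i
noncomputable def hD2x (a x : ℝ) : ℝ := ∑' i : ℕ, ((i:ℝ)+1) * ((i:ℝ)+2) * hc a (i+2) * x ^ i
noncomputable def hFx (a x : ℝ) : ℝ := ∑' i : ℕ, hc a i * x ^ i

lemma summable_master {x : ℝ} (hx : |x| < 1) (u : ℕ → ℝ) (C : ℝ) (k : ℕ)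
    (h : ∀ i, |u i| ≤ C * ((i:ℝ)+1)^k) : Summable (fun i => u i * x ^ i) := by
  apply Summable.of_norm_bounded (g := fun i : ℕ => C * (((i:ℝ)+1)^k * |x| ^ i))
    ((summable_geom_shift k (abs_nonneg x) hx).mul_left C)
  intro i
  rw [Real.norm_eq_abs, abs_mul, abs_pow]
  calc |u i| * |x|^i ≤ C * ((i:ℝ)+1)^k * |x|^i :=
        mul_le_mul_of_nonneg_right (h i) (by positivity)
    _ = C * (((i:ℝ)+1)^k * |x|^i) := by ring

lemma tsum_shift1 (f : ℕ → ℝ) (hf : Summable f) (h0 : f 0 = 0) :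
    ∑' i, f i = ∑' i : ℕ, f (i+1) := by
  rw [Summable.tsum_eq_zero_add hf, h0, zero_add]

section ODE
variable {a : ℝ} (ha0 : 0 < a) (ha1 : a < 1) {x : ℝ} (hx : |x| < 1)
include ha0 ha1 hx

omit hx in
lemma hcb (i : ℕ) : |hc a i| ≤ 1 := by
  rw [abs_of_pos (hc_pos ha0 ha1 i)]; exact hc_le_one ha0 ha1 i

lemma ode :
    x * (1-x) * hD2x a x + (1 - 2*x) * hDx a x - a * (1-a) * hFx a x = 0 := by
  have hb : ∀ i, |hc a i| ≤ 1 := hcb ha0 ha1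
  -- summability of all primed series
  have sA : Summable (fun i : ℕ => (i:ℝ)*((i:ℝ)+1)*hc a (i+1) * x ^ i) := by
    apply summable_master hx _ 1 2
    intro i
    have h1 : |(i:ℝ)*((i:ℝ)+1)*hc a (i+1)| = (i:ℝ)*((i:ℝ)+1)*|hc a (i+1)| := by
      rw [abs_mul]; congr 1; rw [abs_of_nonneg (by positivity)]
    rw [h1]
    nlinarith [hb (i+1), abs_nonneg (hc a (i+1)), Nat.cast_nonneg (α := ℝ) i]
  have sB : Summable (fun i : ℕ => ((i:ℝ)-1)*(i:ℝ)*hc a i * x ^ i) := by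
    apply summable_master hx _ 1 2
    intro i
    have h1 : |((i:ℝ)-1)*(i:ℝ)*hc a i| ≤ |((i:ℝ)-1)*(i:ℝ)| * 1 := by
      rw [abs_mul]; exact mul_le_mul_of_nonneg_left (hb i) (abs_nonneg _)
    refine h1.trans ?_
    rw [mul_one, abs_mul]
    rcases Nat.eq_zero_or_pos i with h | h
    · subst h; norm_num
    · rw [abs_of_nonneg (by
        have : (1:ℝ) ≤ (i:ℝ) := by exact_mod_cast h
        linarith), abs_of_nonneg (Nat.cast_nonneg i)]
      nlinarith [Nat.cast_nonneg (α := ℝ) i]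
  have sC : Summable (fun i : ℕ => ((i:ℝ)+1)*hc a (i+1) * x ^ i) := by
    apply summable_master hx _ 1 1
    intro i
    rw [abs_mul, abs_of_nonneg (by positivity : (0:ℝ) ≤ (i:ℝ)+1)]
    calc ((i:ℝ)+1) * |hc a (i+1)| ≤ ((i:ℝ)+1) * 1 :=
          mul_le_mul_of_nonneg_left (hb (i+1)) (by positivity)
      _ = 1 * ((i:ℝ)+1)^1 := by ring
  have sE : Summable (fun i : ℕ => (i:ℝ)*hc a i * x ^ i) := by
    apply summable_master hx _ 1 1
    intro i
    rw [abs_mul, abs_of_nonneg (Nat.cast_nonneg (α := ℝ) i)]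
    calc (i:ℝ) * |hc a i| ≤ (i:ℝ) * 1 := mul_le_mul_of_nonneg_left (hb i) (Nat.cast_nonneg i)
      _ ≤ 1 * ((i:ℝ)+1)^1 := by push_cast; nlinarith [Nat.cast_nonneg (α := ℝ) i]
  have sG : Summable (fun i : ℕ => hc a i * x ^ i) := by
    apply summable_master hx _ 1 0
    intro i; simpa using hb i
  have sD2 : Summable (fun i : ℕ => ((i:ℝ)+1)*((i:ℝ)+2)*hc a (i+2) * x ^ i) := by
    apply summable_master hx _ 2 2
    intro i
    have h1 : |((i:ℝ)+1)*((i:ℝ)+2)*hc a (i+2)| = ((i:ℝ)+1)*((i:ℝ)+2)*|hc a (i+2)| := by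
      rw [abs_mul]; congr 1; rw [abs_of_nonneg (by positivity)]
    rw [h1]
    nlinarith [hb (i+2), abs_nonneg (hc a (i+2)), Nat.cast_nonneg (α := ℝ) i]
  -- A : x * hD2 = ∑ i(i+1)c(i+1) x^i
  have hA : x * hD2x a x = ∑' i : ℕ, (i:ℝ)*((i:ℝ)+1)*hc a (i+1) * x ^ i := by
    rw [hD2x, ← tsum_mul_left, tsum_shift1 _ sA (by simp)]
    apply tsum_congr; intro i; push_cast; ring
  have hB : x^2 * hD2x a x = ∑' i : ℕ, ((i:ℝ)-1)*(i:ℝ)*hc a i * x ^ i := by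
    rw [hD2x, ← tsum_mul_left, tsum_shift1 _ sB (by simp),
      tsum_shift1 _ ((summable_nat_add_iff 1).mpr sB) (by simp)]
    apply tsum_congr; intro i; push_cast; ring
  have hE : x * hDx a x = ∑' i : ℕ, (i:ℝ)*hc a i * x ^ i := by
    rw [hDx, ← tsum_mul_left, tsum_shift1 _ sE (by simp)]
    apply tsum_congr; intro i; push_cast; ring
  -- combine
  have hzero : ∀ i : ℕ, ((i:ℝ)*((i:ℝ)+1)*hc a (i+1) * x ^ i - ((i:ℝ)-1)*(i:ℝ)*hc a i * x ^ i
      + (((i:ℝ)+1)*hc a (i+1) * x ^ i - (2:ℝ) * ((i:ℝ)*hc a i * x ^ i))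
      - a * ((1-a) * (hc a i * x ^ i))) = 0 := by
    intro i
    have h := hc_succ a i
    linear_combination x ^ i * h
  have key : ∑' i : ℕ, ((i:ℝ)*((i:ℝ)+1)*hc a (i+1) * x ^ i - ((i:ℝ)-1)*(i:ℝ)*hc a i * x ^ i
      + (((i:ℝ)+1)*hc a (i+1) * x ^ i - (2:ℝ) * ((i:ℝ)*hc a i * x ^ i))
      - a * ((1-a) * (hc a i * x ^ i))) = 0 := by
    rw [tsum_congr hzero, tsum_zero]
  have split : ∑' i : ℕ, ((i:ℝ)*((i:ℝ)+1)*hc a (i+1) * x ^ i - ((i:ℝ)-1)*(i:ℝ)*hc a i * x ^ i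
      + (((i:ℝ)+1)*hc a (i+1) * x ^ i - (2:ℝ) * ((i:ℝ)*hc a i * x ^ i))
      - a * ((1-a) * (hc a i * x ^ i)))
      = (x * hD2x a x - x^2 * hD2x a x) + (hDx a x - 2*(x * hDx a x))
        - a * ((1-a) * hFx a x) := by
    rw [Summable.tsum_sub ((sA.sub sB).add (sC.sub (sE.mul_left 2))) ((sG.mul_left (1-a)).mul_left a),
      Summable.tsum_add (sA.sub sB) (sC.sub (sE.mul_left 2)), Summable.tsum_sub sA sB,
      Summable.tsum_sub sC (sE.mul_left 2), tsum_mul_left, tsum_mul_left, tsum_mul_left,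
      ← hA, ← hB, ← hE]
    rfl
  linear_combination key - split
end ODE

section Main
variable {a : ℝ}

lemma hypFR_eq (a : ℝ) : hypFR a = fun x => ∑' i : ℕ, hc a i * x ^ i := rfl

lemma hcb' (ha0 : 0 < a) (ha1 : a < 1) (i : ℕ) : |hc a i| ≤ 1 := by
  rw [abs_of_pos (hc_pos ha0 ha1 i)]; exact hc_le_one ha0 ha1 i

lemma tendsto_hc (ha0 : 0 < a) (ha1 : a < 1) : Tendsto (hc a) atTop (𝓝 0) := by
  have h1 := (tendsto_succ_mul_hc ha0 ha1).mul tendsto_one_div_add_atTop_nhds_zero_nat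
  rw [mul_zero] at h1
  have h2 : Tendsto (fun n : ℕ => hc a (n+1)) atTop (𝓝 0) := by
    apply h1.congr; intro n
    have : ((n:ℝ)+1) ≠ 0 := by positivity
    field_simp
  exact (tendsto_add_atTop_iff_nat 1).mp h2

lemma hd_mono (ha0 : 0 < a) (ha1 : a < 1) :
    Monotone (fun i : ℕ => ((i:ℝ)+1) * hc a (i+1)) := by
  apply monotone_nat_of_le_succ
  intro i
  have := hc_mono_mul ha0 ha1 i
  push_cast
  push_cast at this
  linarith

lemma hd_bound (ha0 : 0 < a) (ha1 : a < 1) (i : ℕ) :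
    |((i:ℝ)+1) * hc a (i+1)| ≤ Real.sin (Real.pi * a) / Real.pi := by
  rw [abs_of_pos (mul_pos (by positivity) (hc_pos ha0 ha1 (i+1)))]
  exact (hd_mono ha0 ha1).ge_of_tendsto (tendsto_succ_mul_hc ha0 ha1) i

lemma hF_deriv (ha0 : 0 < a) (ha1 : a < 1) {x : ℝ} (hx : |x| < 1) :
    HasDerivAt (hypFR a) (hDx a x) x := by
  have h := hasDerivAt_tsum_geom (hc a) 1 (hcb' ha0 ha1) hx
  rw [hypFR_eq]
  exact h

lemma hD_deriv (ha0 : 0 < a) (ha1 : a < 1) {x : ℝ} (hx : |x| < 1) :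
    HasDerivAt (hDx a) (hD2x a x) x := by
  have h := hasDerivAt_tsum_geom (fun i : ℕ => ((i:ℝ)+1) * hc a (i+1))
    (Real.sin (Real.pi * a) / Real.pi) (hd_bound ha0 ha1) hx
  have e1 : (∑' i : ℕ, ((i:ℝ)+1) * ((((i+1:ℕ)):ℝ)+1) * hc a ((i+1)+1) * x ^ i)
      = hD2x a x := by
    rw [hD2x]
    apply tsum_congr
    intro i
    push_cast
    ring
  have e2 : (fun y => ∑' i : ℕ, ((i:ℝ)+1) * hc a (i+1) * y ^ i) = hDx a := rfl
  rw [e2] at h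
  convert h using 1
  rw [← e1]
  apply tsum_congr
  intro i
  push_cast
  ring

lemma hypFR_zero (a : ℝ) : hypFR a 0 = 1 := by
  have h : hypFR a 0 = ∑' i : ℕ, hc a i * (0:ℝ) ^ i := rfl
  rw [h, tsum_eq_single 0 (fun b hb => by rw [zero_pow hb, mul_zero])]
  simp [hc_zero]

noncomputable def hWron (a : ℝ) (x : ℝ) : ℝ :=
  x * (1-x) * (hDx a x * hypFR a (1-x) + hypFR a x * hDx a (1-x))

lemma hWron_deriv (ha0 : 0 < a) (ha1 : a < 1) {x : ℝ} (hx : x ∈ Set.Ioo (0:ℝ) 1) :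
    HasDerivAt (hWron a) 0 x := by
  obtain ⟨hx0, hx1⟩ := hx
  have h1 : |x| < 1 := by rw [abs_lt]; constructor <;> linarith
  have h2 : |1-x| < 1 := by rw [abs_lt]; constructor <;> linarith
  have inner : HasDerivAt (fun y : ℝ => 1 - y) (-1) x := by
    simpa using (hasDerivAt_id x).const_sub 1
  have d1 := hF_deriv ha0 ha1 h1
  have dD1 := hD_deriv ha0 ha1 h1
  have d2 : HasDerivAt (fun y => hypFR a (1-y)) (hDx a (1-x) * -1) x :=
    (hF_deriv ha0 ha1 h2).comp x inner
  have dD2 : HasDerivAt (fun y => hDx a (1-y)) (hD2x a (1-x) * -1) x :=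
    (hD_deriv ha0 ha1 h2).comp x inner
  have hP : HasDerivAt (fun y : ℝ => y * (1-y)) (1*(1-x) + x*(-1)) x :=
    (hasDerivAt_id x).mul inner
  have hW := (dD1.mul d2).add (d1.mul dD2)
  have hPW := hP.mul hW
  have ode1 := ode ha0 ha1 h1
  have ode2 := ode ha0 ha1 h2
  convert hPW using 1
  · rfl
  · rfl
  · rfl
  rw [show hFx a = hypFR a from rfl] at ode1 ode2
  simp only [Pi.add_apply, Pi.mul_apply]
  linear_combination (- hypFR a (1-x)) * ode1 + (hypFR a x) * ode2

/-- For `0 < a < 1` and `0 < λ < 1`: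
`λ(1-λ)(F_a′(λ)F_a(1-λ) + F_a(λ)F_a′(1-λ)) = sin(πa)/π = 1/B(a, 1-a)`. -/
theorem hypFR_wronskian_const (a : ℝ) (ha0 : 0 < a) (ha1 : a < 1)
    (l : ℝ) (hl0 : 0 < l) (hl1 : l < 1) :
    l * (1 - l) * (deriv (hypFR a) l * hypFR a (1 - l) + hypFR a l * deriv (hypFR a) (1 - l))
      = Real.sin (Real.pi * a) / Real.pi := by
  have hl1' : |l| < 1 := by rw [abs_lt]; constructor <;> linarith
  have h1l : |1-l| < 1 := by rw [abs_lt]; constructor <;> linarith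
  -- constancy
  have Hconst : ∀ y ∈ Set.Ioo (0:ℝ) 1, y ≤ l → hWron a y = hWron a l := by
    intro y hy hyl
    have hsub : Set.Icc y l ⊆ Set.Ioo (0:ℝ) 1 := fun z hz =>
      ⟨lt_of_lt_of_le hy.1 hz.1, lt_of_le_of_lt hz.2 hl1⟩
    have cont : ContinuousOn (hWron a) (Set.Icc y l) := fun z hz =>
      ((hWron_deriv ha0 ha1 (hsub hz)).continuousAt).continuousWithinAt
    have der : ∀ z ∈ Set.Ico y l, HasDerivWithinAt (hWron a) 0 (Set.Ici z) z := fun z hz =>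
      (hWron_deriv ha0 ha1 (hsub ⟨hz.1, hz.2.le⟩)).hasDerivWithinAt
    exact (constant_of_has_deriv_right_zero cont der l ⟨hyl, le_refl l⟩).symm
  -- limits
  have hmap : Tendsto (fun x : ℝ => 1 - x) (𝓝[>] (0:ℝ)) (𝓝[<] (1:ℝ)) := by
    apply tendsto_nhdsWithin_of_tendsto_nhds_of_eventually_within
    · have hcont : Continuous (fun x : ℝ => 1 - x) := by continuity
      have h : Tendsto (fun x : ℝ => 1 - x) (𝓝 0) (𝓝 1) := by
        simpa using hcont.tendsto (0:ℝ)
      exact h.mono_left nhdsWithin_le_nhds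
    · filter_upwards [self_mem_nhdsWithin] with x hx
      exact sub_lt_self (1:ℝ) (show (0:ℝ) < x from hx)
  have abel0 : Tendsto (fun u : ℝ => (1-u) * hypFR a u) (𝓝[<] (1:ℝ)) (𝓝 0) := by
    have := abel_aux (hc a) 0 1 (hcb' ha0 ha1) (tendsto_hc ha0 ha1)
    rw [hypFR_eq]
    exact this
  have abels : Tendsto (fun u : ℝ => (1-u) * hDx a u) (𝓝[<] (1:ℝ))
      (𝓝 (Real.sin (Real.pi * a) / Real.pi)) := by
    have := abel_aux (fun i : ℕ => ((i:ℝ)+1) * hc a (i+1)) (Real.sin (Real.pi * a) / Real.pi)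
      (Real.sin (Real.pi * a) / Real.pi) (hd_bound ha0 ha1) (tendsto_succ_mul_hc ha0 ha1)
    exact this
  have t1 : Tendsto (fun x : ℝ => x * hypFR a (1-x)) (𝓝[>] (0:ℝ)) (𝓝 0) := by
    have := abel0.comp hmap
    apply this.congr
    intro x
    simp [Function.comp, sub_sub_cancel]
  have t2 : Tendsto (fun x : ℝ => x * hDx a (1-x)) (𝓝[>] (0:ℝ))
      (𝓝 (Real.sin (Real.pi * a) / Real.pi)) := by
    have := abels.comp hmap
    apply this.congr
    intro x
    simp [Function.comp, sub_sub_cancel]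
  have tF : Tendsto (fun x : ℝ => hypFR a x) (𝓝[>] (0:ℝ)) (𝓝 1) := by
    have hcont := (hF_deriv ha0 ha1 (by norm_num : |(0:ℝ)| < 1)).continuousAt
    have h2 : Tendsto (fun x : ℝ => hypFR a x) (𝓝[>] (0:ℝ)) (𝓝 (hypFR a 0)) :=
      hcont.tendsto.mono_left (nhdsWithin_le_nhds (s := Set.Ioi (0:ℝ)))
    rwa [hypFR_zero] at h2
  have tD : Tendsto (fun x : ℝ => hDx a x) (𝓝[>] (0:ℝ)) (𝓝 (hDx a 0)) :=
    ((hD_deriv ha0 ha1 (by norm_num : |(0:ℝ)| < 1)).continuousAt).tendsto.mono_left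
      (nhdsWithin_le_nhds (s := Set.Ioi (0:ℝ)))
  have tone : Tendsto (fun x : ℝ => 1 - x) (𝓝[>] (0:ℝ)) (𝓝 1) := by
    have hcont : Continuous (fun x : ℝ => 1 - x) := by continuity
    have h : Tendsto (fun x : ℝ => 1 - x) (𝓝 0) (𝓝 1) := by
      simpa using hcont.tendsto (0:ℝ)
    exact h.mono_left nhdsWithin_le_nhds
  have Hlim : Tendsto (hWron a) (𝓝[>] (0:ℝ)) (𝓝 (Real.sin (Real.pi * a) / Real.pi)) := by
    have comb := ((tone.mul tD).mul t1).add ((tF.mul tone).mul t2)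
    have hval : (1 * hDx a 0) * 0 + (1 * 1) * (Real.sin (Real.pi * a) / Real.pi)
        = Real.sin (Real.pi * a) / Real.pi := by ring
    rw [hval] at comb
    apply comb.congr
    intro x
    rw [hWron]
    ring
  have Hev : hWron a =ᶠ[𝓝[>] (0:ℝ)] fun _ => hWron a l := by
    filter_upwards [Ioo_mem_nhdsGT_of_mem (Set.left_mem_Ico.mpr hl0)] with x hx
    exact Hconst x ⟨hx.1, lt_trans hx.2 hl1⟩ hx.2.le
  have hHl : hWron a l = Real.sin (Real.pi * a) / Real.pi := by
    have h2 : Tendsto (fun _ : ℝ => hWron a l) (𝓝[>] (0:ℝ))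
        (𝓝 (Real.sin (Real.pi * a) / Real.pi)) := Hlim.congr' Hev
    exact tendsto_nhds_unique tendsto_const_nhds h2
  rw [(hF_deriv ha0 ha1 hl1').deriv, (hF_deriv ha0 ha1 h1l).deriv]
  exact hHl
end Main
end

section
/- Let a ∈ ℝ with 0 < a < 1 and λ ∈ [0,1). Then the improper integral ∫₀¹ t^{1−a}(1−t)^{a−1}(1−λt)^{−1−a} dt converges and equals (Γ(a)·Γ(1−a)/a)·F_a′(λ), where F_a(λ) = Σ_{i≥0} ((a)_i (1−a)_i / (i!)²) λ^i and F_a′ is its derivative. (This is the period integral ∫_e η_n = B(2−a,a)·₂F₁(1+a,2−a,2;λ) = (N/n)·B(a,1−a)·F_n′(λ) with a = n/N used in the paper.) -/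
open scoped Nat
open Polynomial MeasureTheory

/-- Pochhammer bound: for `0 ≤ x ≤ 2`, `(x)_n ≤ (n+1)!`. -/
lemma poch_le_two {x : ℝ} (hx0 : 0 ≤ x) (hx2 : x ≤ 2) (n : ℕ) :
    (ascPochhammer ℝ n).eval x ≤ (n + 1)! := by
  induction n with
  | zero => simp [Nat.factorial]
  | succ n ih =>
      rw [ascPochhammer_succ_eval]
      have hpos : (0:ℝ) ≤ (ascPochhammer ℝ n).eval x := by
        rcases eq_or_lt_of_le hx0 with h | h
        · rcases n with _ | n
          · simp
          · rw [← h]; simp [ascPochhammer_eval_zero]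
        · exact (ascPochhammer_pos n x h).le
      have h1 : (ascPochhammer ℝ n).eval x * (x + n) ≤ ((n+1)! : ℝ) * (n + 2) := by
        apply mul_le_mul ih (by linarith) (by linarith)
        positivity
      calc (ascPochhammer ℝ n).eval x * (x + n) ≤ ((n+1)! : ℝ) * (n + 2) := h1
        _ = ((n + 2)! : ℝ) := by
            rw [show n + 2 = (n+1) + 1 by ring, Nat.factorial_succ (n+1)]
            push_cast; ring
        _ = ((n + 1 + 1)! : ℝ) := by norm_num

/-- Pochhammer bound: for `0 ≤ x ≤ 1`, `(x)_n ≤ n!`. -/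
lemma poch_le_one {x : ℝ} (hx0 : 0 ≤ x) (hx1 : x ≤ 1) (n : ℕ) :
    (ascPochhammer ℝ n).eval x ≤ n ! := by
  induction n with
  | zero => simp [Nat.factorial]
  | succ n ih =>
      rw [ascPochhammer_succ_eval]
      have hpos : (0:ℝ) ≤ (ascPochhammer ℝ n).eval x := by
        rcases eq_or_lt_of_le hx0 with h | h
        · rcases n with _ | n
          · simp
          · rw [← h]; simp [ascPochhammer_eval_zero]
        · exact (ascPochhammer_pos n x h).le
      have h1 : (ascPochhammer ℝ n).eval x * (x + n) ≤ (n ! : ℝ) * (n + 1) := by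
        apply mul_le_mul ih (by linarith) (by linarith)
        positivity
      calc (ascPochhammer ℝ n).eval x * (x + n) ≤ (n ! : ℝ) * (n + 1) := h1
        _ = ((n + 1)! : ℝ) := by rw [Nat.factorial_succ]; push_cast; ring

lemma poch_nonneg {x : ℝ} (hx0 : 0 ≤ x) (n : ℕ) :
    0 ≤ (ascPochhammer ℝ n).eval x := by
  rcases eq_or_lt_of_le hx0 with h | h
  · rcases n with _ | n
    · simp
    · rw [← h]; simp [ascPochhammer_eval_zero]
  · exact (ascPochhammer_pos n x h).le

/-- `(x)_{n+1} = x * (x+1)_n`. -/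
lemma poch_succ_left (x : ℝ) (n : ℕ) :
    (ascPochhammer ℝ (n+1)).eval x = x * (ascPochhammer ℝ n).eval (x + 1) := by
  rw [ascPochhammer_succ_left]
  simp [eval_mul, eval_comp]

/-- `Γ(x + n) = (x)_n Γ(x)` for `x > 0`. -/
lemma Gamma_add_nat {x : ℝ} (hx : 0 < x) (n : ℕ) :
    Real.Gamma (x + n) = (ascPochhammer ℝ n).eval x * Real.Gamma x := by
  induction n with
  | zero => simp
  | succ n ih =>
      have hne : x + (n:ℝ) ≠ 0 := by positivity
      have : x + ((n+1 : ℕ) : ℝ) = (x + n) + 1 := by push_cast; ring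
      rw [this, Real.Gamma_add_one hne, ih, ascPochhammer_succ_eval]
      ring

lemma summable_cube_geom {r : ℝ} (h0 : 0 ≤ r) (h1 : r < 1) :
    Summable fun n : ℕ => ((n:ℝ)+1)^3 * r ^ n := by
  have h3 : Summable fun n : ℕ => (n:ℝ)^3 * r^n :=
    summable_pow_mul_geometric_of_norm_lt_one 3 (by rwa [Real.norm_eq_abs, abs_of_nonneg h0])
  have h2 : Summable fun n : ℕ => (n:ℝ)^2 * r^n :=
    summable_pow_mul_geometric_of_norm_lt_one 2 (by rwa [Real.norm_eq_abs, abs_of_nonneg h0])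
  have h1' : Summable fun n : ℕ => (n:ℝ)^1 * r^n :=
    summable_pow_mul_geometric_of_norm_lt_one 1 (by rwa [Real.norm_eq_abs, abs_of_nonneg h0])
  have h0' : Summable fun n : ℕ => r^n := summable_geometric_of_lt_one h0 h1
  have := ((h3.add ((h2.mul_left 3))).add ((h1'.mul_left 3).add h0'))
  refine this.congr fun n => ?_
  simp only [Pi.add_apply, pow_one]
  ring

/-- Bound for the derivative terms of a power series with coefficients `|c n| ≤ M (n+1)`. -/
lemma deriv_term_bound {c : ℕ → ℝ} {M : ℝ} (hc : ∀ n, |c n| ≤ M * (n+1))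
    {r y : ℝ} (hr : 0 < r) (hy : |y| ≤ r) (n : ℕ) :
    ‖c n * ((n:ℝ) * y ^ (n-1))‖ ≤ M / r * (((n:ℝ)+1)^3 * r^n) := by
  have hM : 0 ≤ M := by
    have := (abs_nonneg (c 0)).trans (hc 0); nlinarith
  rcases n with _ | m
  · simp only [Nat.cast_zero, zero_mul, mul_zero, norm_zero]
    positivity
  · have hyp : |y| ^ m ≤ r ^ m := pow_le_pow_left₀ (abs_nonneg y) hy m
    have h1 : ‖c (m+1) * (((m+1:ℕ):ℝ) * y ^ m)‖
        = |c (m+1)| * (((m:ℝ)+1) * |y| ^ m) := by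
      rw [norm_mul, Real.norm_eq_abs, Real.norm_eq_abs, abs_mul, abs_pow]
      push_cast
      rw [abs_of_nonneg (by positivity : (0:ℝ) ≤ (m:ℝ)+1)]
    rw [show (m+1) - 1 = m from rfl, h1]
    have h2 : |c (m+1)| * (((m:ℝ)+1) * |y| ^ m) ≤ (M * ((m:ℝ)+1+1)) * (((m:ℝ)+1) * r ^ m) := by
      apply mul_le_mul (by simpa using hc (m+1)) (by nlinarith [pow_nonneg (abs_nonneg y) m]) (by positivity) (by positivity)
    refine h2.trans ?_
    have hrm : r ^ (m+1) = r * r ^ m := pow_succ' r m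
    rw [div_mul_eq_mul_div, le_div_iff₀ hr]
    push_cast
    rw [hrm]
    have k1 : ((m:ℝ)+1+1) * ((m:ℝ)+1) ≤ ((m:ℝ)+1+1)^3 := by
      nlinarith [Nat.cast_nonneg (α := ℝ) m, sq_nonneg ((m:ℝ)+1)]
    have k2 : (0:ℝ) ≤ r * r^m := by positivity
    calc M * ((m:ℝ)+1+1) * (((m:ℝ)+1) * r ^ m) * r
        = M * (((m:ℝ)+1+1) * ((m:ℝ)+1)) * (r * r^m) := by ring
      _ ≤ M * (((m:ℝ)+1+1)^3) * (r * r^m) := by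
          exact mul_le_mul_of_nonneg_right (mul_le_mul_of_nonneg_left k1 hM) k2
      _ = M * (((m:ℝ)+1+1)^3 * (r * r^m)) := by ring

lemma summable_pow_series {c : ℕ → ℝ} {M : ℝ} (hc : ∀ n, |c n| ≤ M * (n+1))
    {x : ℝ} (hx : |x| < 1) : Summable fun n => c n * x ^ n := by
  refine Summable.of_norm_bounded (((summable_cube_geom (abs_nonneg x) hx).mul_left M)) fun n => ?_
  have hM : 0 ≤ M := by
    have := (abs_nonneg (c 0)).trans (hc 0); nlinarith
  rw [norm_mul, Real.norm_eq_abs, Real.norm_eq_abs, abs_pow]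
  calc |c n| * |x| ^ n ≤ (M * ((n:ℝ)+1)) * |x| ^ n := by
        apply mul_le_mul_of_nonneg_right (hc n) (by positivity)
    _ ≤ M * (((n:ℝ)+1)^3 * |x|^n) := by
        have h1 : ((n:ℝ)+1) ≤ ((n:ℝ)+1)^3 := by
          nlinarith [Nat.cast_nonneg (α := ℝ) n, sq_nonneg (n:ℝ),
            pow_nonneg (Nat.cast_nonneg (α := ℝ) n) 3]
        have := mul_le_mul_of_nonneg_right h1 (pow_nonneg (abs_nonneg x) n)
        nlinarith [pow_nonneg (abs_nonneg x) n]

lemma summable_deriv_pow {c : ℕ → ℝ} {M : ℝ} (hc : ∀ n, |c n| ≤ M * (n+1))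
    {x : ℝ} (hx : |x| < 1) : Summable fun n => c n * ((n:ℝ) * x ^ (n-1)) := by
  set r : ℝ := (|x| + 1)/2 with hrdef
  have hr0 : 0 < r := by have := abs_nonneg x; rw [hrdef]; linarith
  have hr1 : r < 1 := by rw [hrdef]; linarith
  have hxr : |x| ≤ r := by rw [hrdef]; linarith
  exact Summable.of_norm_bounded (((summable_cube_geom hr0.le hr1).mul_left (M/r)))
    (fun n => deriv_term_bound hc hr0 hxr n)

/-- Term-by-term differentiation of a power series with coefficients `|c n| ≤ M (n+1)`,
valid on `|x| < 1`. -/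
lemma hasDerivAt_tsum_pow {c : ℕ → ℝ} {M : ℝ} (hc : ∀ n, |c n| ≤ M * (n+1))
    {x : ℝ} (hx : |x| < 1) :
    HasDerivAt (fun y : ℝ => ∑' n, c n * y ^ n) (∑' n, c n * ((n:ℝ) * x ^ (n-1))) x := by
  set r : ℝ := (|x| + 1)/2 with hrdef
  have hr0 : 0 < r := by have := abs_nonneg x; rw [hrdef]; linarith
  have hr1 : r < 1 := by rw [hrdef]; linarith
  have hxr : |x| < r := by rw [hrdef]; linarith
  apply hasDerivAt_tsum_of_isPreconnected (y₀ := (0:ℝ))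
    (u := fun n : ℕ => M / r * (((n:ℝ)+1)^3 * r^n))
    (((summable_cube_geom hr0.le hr1).mul_left (M/r)))
    Metric.isOpen_ball (convex_ball (0:ℝ) r).isPreconnected
    (g' := fun (n : ℕ) (y : ℝ) => c n * ((n:ℝ) * y ^ (n-1)))
    (fun n y _ => (hasDerivAt_pow n y).const_mul (c n))
    (fun n y hy => deriv_term_bound hc hr0
      (by rw [Metric.mem_ball, Real.dist_eq, sub_zero] at hy; exact hy.le) n)
    (by simpa using hr0) ?_ (by simpa [Metric.mem_ball, Real.dist_eq] using hxr)
  · apply summable_of_ne_finset_zero (s := {0})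
    intro n hn
    simp only [Finset.mem_singleton] at hn
    simp [zero_pow hn]

/-- ODE for the binomial coefficient series. -/
lemma binom_ode {a : ℝ} (ha0 : 0 < a) (ha1 : a < 1) {y : ℝ} (hy : |y| < 1) :
    (1 - y) * (∑' k, ((ascPochhammer ℝ k).eval (1+a) / k !) * ((k:ℝ) * y ^ (k-1)))
      = (1 + a) * ∑' k, ((ascPochhammer ℝ k).eval (1+a) / k !) * y ^ k := by
  set b : ℕ → ℝ := fun k => (ascPochhammer ℝ k).eval (1+a) / k ! with hbdef
  show (1 - y) * (∑' k, b k * ((k:ℝ) * y ^ (k-1))) = (1 + a) * ∑' k, b k * y ^ k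
  have hb : ∀ n, |b n| ≤ 1 * ((n:ℝ)+1) := by
    intro n
    have hnn : 0 ≤ b n := by
      apply div_nonneg (poch_nonneg (by linarith) n) (by positivity)
    rw [abs_of_nonneg hnn, one_mul, hbdef]
    rw [div_le_iff₀ (by positivity : (0:ℝ) < (n ! : ℝ))]
    calc (ascPochhammer ℝ n).eval (1+a) ≤ ((n+1)! : ℝ) := poch_le_two (by linarith) (by linarith) n
      _ = ((n:ℝ)+1) * (n ! : ℝ) := by rw [Nat.factorial_succ]; push_cast; ring
  have hrec : ∀ k : ℕ, b (k+1) * ((k:ℝ)+1) = b k * ((1+a) + k) := by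
    intro k
    rw [hbdef]
    simp only [ascPochhammer_succ_eval, Nat.factorial_succ]
    have hk : ((k+1:ℕ) : ℝ) ≠ 0 := by positivity
    field_simp
    push_cast
    ring
  -- summabilities
  have hS : Summable fun k => b k * ((k:ℝ) * y ^ (k-1)) := summable_deriv_pow hb hy
  have hf : Summable fun k => b k * y ^ k := summable_pow_series hb hy
  have hkf : Summable fun k => (b k * (k:ℝ)) * y ^ k := by
    have hb' : ∀ n, |b n * (n:ℝ)| ≤ ((n:ℝ)+1) * ((n:ℝ)+1) := by
      intro n
      rw [abs_mul, Nat.abs_cast]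
      apply mul_le_mul (by simpa using hb n) (by linarith) (Nat.cast_nonneg n) (by positivity)
    refine Summable.of_norm_bounded ((summable_cube_geom (abs_nonneg y) hy)) fun n => ?_
    rw [norm_mul, Real.norm_eq_abs, Real.norm_eq_abs, abs_pow]
    calc |b n * (n:ℝ)| * |y| ^ n ≤ (((n:ℝ)+1) * ((n:ℝ)+1)) * |y| ^ n := by
          exact mul_le_mul_of_nonneg_right (hb' n) (by positivity)
      _ ≤ ((n:ℝ)+1)^3 * |y|^n := by
          have : (((n:ℝ)+1) * ((n:ℝ)+1)) ≤ ((n:ℝ)+1)^3 := by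
            nlinarith [Nat.cast_nonneg (α := ℝ) n]
          exact mul_le_mul_of_nonneg_right this (by positivity)
  -- shift the derivative sum
  have hshift : (∑' k, b k * ((k:ℝ) * y ^ (k-1)))
      = ∑' k, b (k+1) * (((k:ℝ)+1) * y ^ k) := by
    rw [Summable.tsum_eq_zero_add hS]
    simp only [Nat.cast_zero, zero_mul, mul_zero, zero_add]
    congr 1
    funext k
    push_cast
    simp [Nat.succ_sub_one]
  have hterm : ∀ k : ℕ, b (k+1) * (((k:ℝ)+1) * y ^ k)
      = (b k * (k:ℝ)) * y ^ k + ((1+a) * (b k * y ^ k)) := by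
    intro k
    have h := hrec k
    calc b (k+1) * (((k:ℝ)+1) * y ^ k) = (b (k+1) * ((k:ℝ)+1)) * y ^ k := by ring
      _ = (b k * ((1+a) + k)) * y ^ k := by rw [h]
      _ = (b k * (k:ℝ)) * y ^ k + ((1+a) * (b k * y ^ k)) := by ring
  -- the y-multiplied sum
  have hymul : y * (∑' k, b k * ((k:ℝ) * y ^ (k-1))) = ∑' k, (b k * (k:ℝ)) * y ^ k := by
    rw [hshift, ← tsum_mul_left]
    rw [Summable.tsum_eq_zero_add hkf]
    simp only [Nat.cast_zero, mul_zero, zero_mul, zero_add]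
    congr 1
    funext k
    push_cast
    ring
  have hmain : (∑' k, b k * ((k:ℝ) * y ^ (k-1)))
      = ∑' k, ((b k * (k:ℝ)) * y ^ k + (1+a) * (b k * y ^ k)) := by
    rw [hshift]
    exact tsum_congr hterm
  calc (1 - y) * (∑' k, b k * ((k:ℝ) * y ^ (k-1)))
      = (∑' k, b k * ((k:ℝ) * y ^ (k-1))) - y * (∑' k, b k * ((k:ℝ) * y ^ (k-1))) := by ring
    _ = (∑' k, ((b k * (k:ℝ)) * y ^ k + (1+a) * (b k * y ^ k))) - ∑' k, (b k * (k:ℝ)) * y ^ k := by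
        rw [← hmain, ← hymul]
    _ = ((∑' k, (b k * (k:ℝ)) * y ^ k) + ∑' k, (1+a) * (b k * y ^ k)) - ∑' k, (b k * (k:ℝ)) * y ^ k := by
        rw [Summable.tsum_add hkf (hf.mul_left (1+a))]
    _ = ∑' k, (1+a) * (b k * y ^ k) := by ring
    _ = (1 + a) * ∑' k, b k * y ^ k := by rw [tsum_mul_left]

/-- Binomial series: `(1-x)^{-1-a} = ∑ (1+a)_k / k! x^k` for `0 ≤ x < 1`, `0 < a < 1`. -/
lemma binom_series {a : ℝ} (ha0 : 0 < a) (ha1 : a < 1) {x : ℝ} (hx0 : 0 ≤ x) (hx1 : x < 1) :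
    ∑' k, ((ascPochhammer ℝ k).eval (1+a) / k !) * x ^ k = (1-x) ^ (-1-a : ℝ) := by
  set b : ℕ → ℝ := fun k => (ascPochhammer ℝ k).eval (1+a) / k ! with hbdef
  have hb : ∀ n, |b n| ≤ 1 * ((n:ℝ)+1) := by
    intro n
    have hnn : 0 ≤ b n := by
      apply div_nonneg (poch_nonneg (by linarith) n) (by positivity)
    rw [abs_of_nonneg hnn, one_mul, hbdef]
    rw [div_le_iff₀ (by positivity : (0:ℝ) < (n ! : ℝ))]
    calc (ascPochhammer ℝ n).eval (1+a) ≤ ((n+1)! : ℝ) := poch_le_two (by linarith) (by linarith) n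
      _ = ((n:ℝ)+1) * (n ! : ℝ) := by rw [Nat.factorial_succ]; push_cast; ring
  set f : ℝ → ℝ := fun y => ∑' k, b k * y ^ k with hfdef
  set g : ℝ → ℝ := fun y => (1-y) ^ ((1:ℝ)+a) * f y with hgdef
  have hg0 : ∀ y : ℝ, |y| < 1 → HasDerivAt g 0 y := by
    intro y hy
    have h1y : (0:ℝ) < 1 - y := by
      have h := abs_lt.1 hy; linarith [h.2]
    have hf' : HasDerivAt f (∑' k, b k * ((k:ℝ) * y ^ (k-1))) y := hasDerivAt_tsum_pow hb hy
    have hw : HasDerivAt (fun y : ℝ => 1 - y) (-1) y := by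
      simpa using (hasDerivAt_id y).const_sub 1
    have hpow : HasDerivAt (fun y : ℝ => (1-y) ^ ((1:ℝ)+a))
        ((-1) * ((1:ℝ)+a) * (1-y) ^ ((1:ℝ)+a-1)) y :=
      hw.rpow_const (Or.inl h1y.ne')
    have hprod := hpow.mul hf'
    have heq : (-1) * ((1:ℝ)+a) * (1-y) ^ ((1:ℝ)+a-1) * f y
        + (1-y) ^ ((1:ℝ)+a) * (∑' k, b k * ((k:ℝ) * y ^ (k-1))) = 0 := by
      have hode : (1 - y) * (∑' k, b k * ((k:ℝ) * y ^ (k-1)))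
          = (1 + a) * ∑' k, b k * y ^ k := binom_ode ha0 ha1 hy
      have hexp : ((1:ℝ)+a-1) = a := by ring
      have hsplit : (1-y) ^ ((1:ℝ)+a) = (1-y) ^ (a:ℝ) * (1-y) := by
        rw [show ((1:ℝ)+a) = a + 1 by ring, Real.rpow_add h1y, Real.rpow_one]
      rw [hexp, hsplit]
      have hfx : f y = ∑' k, b k * y ^ k := rfl
      calc (-1) * ((1:ℝ)+a) * (1-y) ^ (a:ℝ) * f y
            + (1-y) ^ (a:ℝ) * (1-y) * (∑' k, b k * ((k:ℝ) * y ^ (k-1)))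
          = (1-y) ^ (a:ℝ) * ((1-y) * (∑' k, b k * ((k:ℝ) * y ^ (k-1))) - (1+a) * f y) := by
            ring
        _ = 0 := by rw [hfx, hode]; ring
    have hres : HasDerivAt (fun y : ℝ => (1-y) ^ ((1:ℝ)+a) * f y) 0 y := by
      rw [← heq]; exact hprod
    exact hres
  have hconst : g x = g 0 := by
    rcases eq_or_lt_of_le hx0 with h | h
    · rw [← h]
    · have h2 := constant_of_has_deriv_right_zero (f := g) (a := 0) (b := x)
        (fun y hy => by
          have hy1 : |y| < 1 := by
            rw [Set.mem_Icc] at hy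
            rw [abs_lt]; constructor <;> linarith [hy.1, hy.2]
          exact (hg0 y hy1).continuousAt.continuousWithinAt)
        (fun y hy => by
          have hy1 : |y| < 1 := by
            rw [Set.mem_Ico] at hy
            rw [abs_lt]; constructor <;> linarith [hy.1, hy.2]
          exact (hg0 y hy1).hasDerivWithinAt)
      exact h2 x (Set.mem_Icc.2 ⟨hx0, le_rfl⟩)
  have hf0 : f 0 = 1 := by
    show ∑' k, b k * (0:ℝ) ^ k = 1
    rw [tsum_eq_single 0 (fun k hk => by simp [zero_pow hk])]
    simp [hbdef]
  have hg0v : g 0 = 1 := by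
    show (1-(0:ℝ)) ^ ((1:ℝ)+a) * f 0 = 1
    rw [hf0]; simp
  have hgx : (1-x) ^ ((1:ℝ)+a) * f x = 1 := hconst.trans hg0v
  have h1x : (0:ℝ) < 1 - x := by linarith
  have hfx : f x = ((1-x) ^ ((1:ℝ)+a))⁻¹ := eq_inv_of_mul_eq_one_right
    hgx
  rw [show (-1-a : ℝ) = -(1+a) by ring, Real.rpow_neg h1x.le]
  exact hfx

/-- Real Beta integral integrability. -/
lemma real_beta_integrable {u v : ℝ} (hu : 0 < u) (hv : 0 < v) :
    IntervalIntegrable (fun t : ℝ => t ^ (u-1) * (1-t) ^ (v-1))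
      MeasureTheory.volume 0 1 := by
  have hC := Complex.betaIntegral_convergent (u := (u:ℂ)) (v := (v:ℂ))
    (by simpa using hu) (by simpa using hv)
  rw [intervalIntegrable_iff_integrableOn_Ioc_of_le zero_le_one] at hC ⊢
  have heq : ∀ x ∈ Set.Ioc (0:ℝ) 1,
      (x:ℂ) ^ ((u:ℂ)-1) * ((1:ℂ)-x) ^ ((v:ℂ)-1)
        = ((x ^ (u-1) * (1-x) ^ (v-1) : ℝ) : ℂ) := by
    intro x hx
    rw [Set.mem_Ioc] at hx
    have h1 : ((u:ℂ)-1) = ((u-1 : ℝ) : ℂ) := by push_cast; ring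
    have h2 : ((v:ℂ)-1) = ((v-1 : ℝ) : ℂ) := by push_cast; ring
    have h3 : ((1:ℂ) - (x:ℂ)) = (((1 - x : ℝ)) : ℂ) := by push_cast; ring
    rw [h1, h2, h3, ← Complex.ofReal_cpow hx.1.le, ← Complex.ofReal_cpow (by linarith [hx.2]),
      ← Complex.ofReal_mul]
  have hC' : MeasureTheory.IntegrableOn
      (fun x : ℝ => ((x ^ (u-1) * (1-x) ^ (v-1) : ℝ) : ℂ)) (Set.Ioc (0:ℝ) 1) := by
    exact MeasureTheory.IntegrableOn.congr_fun hC heq measurableSet_Ioc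
  have := hC'.re
  refine this.congr (MeasureTheory.ae_of_all _ fun x => ?_)
  simp [RCLike.re]

/-- Real Beta integral value. -/
lemma real_beta_value {u v : ℝ} (hu : 0 < u) (hv : 0 < v) :
    ∫ t in (0:ℝ)..1, t ^ (u-1) * (1-t) ^ (v-1)
      = Real.Gamma u * Real.Gamma v / Real.Gamma (u+v) := by
  have key := Complex.Gamma_mul_Gamma_eq_betaIntegral (s := (u:ℂ)) (t := (v:ℂ))
    (by simpa using hu) (by simpa using hv)
  have hbeta : Complex.betaIntegral (u:ℂ) (v:ℂ)
      = ((∫ t in (0:ℝ)..1, t ^ (u-1) * (1-t) ^ (v-1) : ℝ) : ℂ) := by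
    rw [Complex.betaIntegral]
    rw [show (∫ t in (0:ℝ)..1, (t:ℂ) ^ ((u:ℂ)-1) * ((1:ℂ)-t) ^ ((v:ℂ)-1))
        = ∫ t in (0:ℝ)..1, ((t ^ (u-1) * (1-t) ^ (v-1) : ℝ) : ℂ) from ?_]
    · exact intervalIntegral.integral_ofReal
    · apply intervalIntegral.integral_congr
      intro x hx
      rw [Set.uIcc_of_le zero_le_one, Set.mem_Icc] at hx
      have h1 : ((u:ℂ)-1) = ((u-1 : ℝ) : ℂ) := by push_cast; ring
      have h2 : ((v:ℂ)-1) = ((v-1 : ℝ) : ℂ) := by push_cast; ring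
      have h3 : ((1:ℂ) - (x:ℂ)) = (((1 - x : ℝ)) : ℂ) := by push_cast; ring
      simp only [h1, h2, h3]
      rw [← Complex.ofReal_cpow hx.1, ← Complex.ofReal_cpow (by linarith [hx.2]),
        ← Complex.ofReal_mul]
  rw [hbeta, ← Complex.ofReal_add, Complex.Gamma_ofReal, Complex.Gamma_ofReal,
    Complex.Gamma_ofReal, ← Complex.ofReal_mul, ← Complex.ofReal_mul] at key
  have kreal : Real.Gamma u * Real.Gamma v
      = Real.Gamma (u+v) * ∫ t in (0:ℝ)..1, t ^ (u-1) * (1-t) ^ (v-1) := by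
    exact_mod_cast key
  have hne : Real.Gamma (u+v) ≠ 0 := (Real.Gamma_pos_of_pos (by linarith)).ne'
  field_simp [kreal]
  rw [kreal]; ring

/-- For `0 < a < 1` and `0 ≤ λ < 1`, the period integral
`∫₀¹ t^{1-a}(1-t)^{a-1}(1-λt)^{-1-a} dt` converges and equals
`(Γ(a)Γ(1-a)/a)·F_a′(λ)`. -/
theorem period_integral_eta (a : ℝ) (ha0 : 0 < a) (ha1 : a < 1)
    (l : ℝ) (hl0 : 0 ≤ l) (hl1 : l < 1) :
    IntervalIntegrable
        (fun t : ℝ => t ^ (1 - a) * (1 - t) ^ (a - 1) * (1 - l * t) ^ (-1 - a))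
        MeasureTheory.volume 0 1 ∧
    (∫ t in (0:ℝ)..1, t ^ (1 - a) * (1 - t) ^ (a - 1) * (1 - l * t) ^ (-1 - a))
      = Real.Gamma a * Real.Gamma (1 - a) / a * deriv (hypFR a) l := by
  have hl : |l| < 1 := by rwa [abs_of_nonneg hl0]
  -- the coefficients
  set c : ℕ → ℝ := fun i =>
    (ascPochhammer ℝ i).eval a * (ascPochhammer ℝ i).eval (1 - a) / ((i ! : ℝ)) ^ 2
    with hcdef
  set b : ℕ → ℝ := fun k => (ascPochhammer ℝ k).eval (1+a) / k ! with hbdef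
  have hfactpos : ∀ n : ℕ, (0:ℝ) < n ! := fun n => by positivity
  have hc : ∀ i, |c i| ≤ 1 * ((i:ℝ)+1) := by
    intro i
    have h1 : (ascPochhammer ℝ i).eval a ≤ (i ! : ℝ) := poch_le_one ha0.le ha1.le i
    have h2 : (ascPochhammer ℝ i).eval (1-a) ≤ (i ! : ℝ) :=
      poch_le_one (by linarith) (by linarith) i
    have hn1 : 0 ≤ (ascPochhammer ℝ i).eval a := poch_nonneg ha0.le i
    have hn2 : 0 ≤ (ascPochhammer ℝ i).eval (1-a) := poch_nonneg (by linarith) i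
    have hnn : 0 ≤ c i := by
      rw [hcdef]; positivity
    rw [abs_of_nonneg hnn, one_mul, hcdef]
    rw [div_le_iff₀ (by positivity)]
    nlinarith [mul_le_mul h1 h2 hn2 (hfactpos i).le,
      mul_nonneg (Nat.cast_nonneg (α := ℝ) i) (sq_nonneg ((i ! : ℝ)))]
  have hb : ∀ n, |b n| ≤ 1 * ((n:ℝ)+1) := by
    intro n
    have hnn : 0 ≤ b n := by
      apply div_nonneg (poch_nonneg (by linarith) n) (by positivity)
    rw [abs_of_nonneg hnn, one_mul, hbdef]
    rw [div_le_iff₀ (hfactpos n)]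
    calc (ascPochhammer ℝ n).eval (1+a) ≤ ((n+1)! : ℝ) := poch_le_two (by linarith) (by linarith) n
      _ = ((n:ℝ)+1) * (n ! : ℝ) := by rw [Nat.factorial_succ]; push_cast; ring
  -- derivative of hypFR
  have hderiv : deriv (hypFR a) l = ∑' i, c i * ((i:ℝ) * l ^ (i-1)) := by
    have h := hasDerivAt_tsum_pow hc hl
    have h' : HasDerivAt (hypFR a) (∑' i, c i * ((i:ℝ) * l ^ (i-1))) l := h
    exact h'.deriv
  have hSsum : Summable fun i => c i * ((i:ℝ) * l ^ (i-1)) := summable_deriv_pow hc hl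
  have hshift : (∑' i, c i * ((i:ℝ) * l ^ (i-1)))
      = ∑' k, c (k+1) * (((k:ℝ)+1) * l ^ k) := by
    rw [Summable.tsum_eq_zero_add hSsum]
    simp only [Nat.cast_zero, zero_mul, mul_zero, zero_add]
    congr 1
    funext k
    push_cast
    simp [Nat.succ_sub_one]
  have hshiftsum : Summable fun k => c (k+1) * (((k:ℝ)+1) * l ^ k) := by
    have := (summable_nat_add_iff 1).2 hSsum
    refine this.congr fun k => ?_
    push_cast
    simp [Nat.succ_sub_one]
  -- the summands
  set F : ℕ → ℝ → ℝ := fun k t => (b k * l^k) * (t ^ ((2-a+(k:ℝ))-1) * (1-t) ^ (a-1))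
    with hFdef
  have hkpos : ∀ k : ℕ, (0:ℝ) < 2-a+(k:ℝ) := fun k => by
    have := Nat.cast_nonneg (α := ℝ) k; linarith
  have hFint : ∀ k, IntegrableOn (F k) (Set.Ioc (0:ℝ) 1) := by
    intro k
    have h := real_beta_integrable (u := 2-a+(k:ℝ)) (v := a) (hkpos k) ha0
    rw [intervalIntegrable_iff_integrableOn_Ioc_of_le zero_le_one] at h
    exact (h.const_mul (b k * l^k))
  have hFval : ∀ k, (∫ t in Set.Ioc (0:ℝ) 1, F k t)
      = Real.Gamma a * Real.Gamma (1-a) / a * (c (k+1) * (((k:ℝ)+1) * l ^ k)) := by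
    intro k
    have hval := real_beta_value (u := 2-a+(k:ℝ)) (v := a) (hkpos k) ha0
    have h1 : (∫ t in Set.Ioc (0:ℝ) 1, F k t)
        = (b k * l^k) * ∫ t in (0:ℝ)..1, t ^ ((2-a+(k:ℝ))-1) * (1-t) ^ (a-1) := by
      rw [intervalIntegral.integral_of_le zero_le_one, hFdef]
      exact integral_const_mul _ _
    rw [h1, hval]
    -- Gamma computations
    have hG1 : Real.Gamma (2-a+(k:ℝ))
        = (ascPochhammer ℝ k).eval (2-a) * Real.Gamma (2-a) :=
      Gamma_add_nat (by linarith) k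
    have hG2 : Real.Gamma (2-a) = (1-a) * Real.Gamma (1-a) := by
      rw [show (2-a:ℝ) = (1-a)+1 by ring, Real.Gamma_add_one (by linarith)]
    have hG3 : Real.Gamma (2-a+(k:ℝ)+a) = ((k+1)! : ℝ) := by
      rw [show (2-a+(k:ℝ)+a) = ((k+1:ℕ):ℝ)+1 by push_cast; ring,
        Real.Gamma_nat_eq_factorial]
    rw [hG1, hG2, hG3, hbdef, hcdef]
    simp only
    -- Pochhammer recursions
    have hP1 : (ascPochhammer ℝ (k+1)).eval a = a * (ascPochhammer ℝ k).eval (a+1) :=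
      poch_succ_left a k
    have hP2 : (ascPochhammer ℝ (k+1)).eval (1-a) = (1-a) * (ascPochhammer ℝ k).eval (2-a) := by
      rw [poch_succ_left (1-a) k, show (1-a+1:ℝ) = 2-a by ring]
    rw [hP1, hP2, show (1+a:ℝ) = a+1 by ring]
    have hfs : ((k+1)! : ℝ) = ((k:ℝ)+1) * (k ! : ℝ) := by
      rw [Nat.factorial_succ]; push_cast; ring
    rw [hfs]
    have hk1 : ((k:ℝ)+1) ≠ 0 := by positivity
    field_simp
  -- nonnegativity and norm integrals
  have hFnonneg : ∀ k, ∀ t ∈ Set.Ioc (0:ℝ) 1, 0 ≤ F k t := by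
    intro k t ht
    rw [Set.mem_Ioc] at ht
    have hb0 : 0 ≤ b k := by
      rw [hbdef]
      apply div_nonneg (poch_nonneg (by linarith) k) (by positivity)
    have h1 : (0:ℝ) ≤ t ^ ((2-a+(k:ℝ))-1) := Real.rpow_nonneg ht.1.le _
    have h2 : (0:ℝ) ≤ (1-t) ^ (a-1) := Real.rpow_nonneg (by linarith [ht.2]) _
    rw [hFdef]
    have hlk : (0:ℝ) ≤ l ^ k := pow_nonneg hl0 k
    positivity
  have hnorm : ∀ k, (∫ t in Set.Ioc (0:ℝ) 1, ‖F k t‖)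
      = ∫ t in Set.Ioc (0:ℝ) 1, F k t := by
    intro k
    apply setIntegral_congr_fun measurableSet_Ioc
    intro t ht
    show ‖F k t‖ = F k t
    rw [Real.norm_eq_abs, abs_of_nonneg (hFnonneg k t ht)]
  have hsummable_int : Summable fun k => ∫ t in Set.Ioc (0:ℝ) 1, ‖F k t‖ := by
    refine (hshiftsum.mul_left (Real.Gamma a * Real.Gamma (1-a) / a)).congr fun k => ?_
    rw [hnorm k, hFval k]
  -- the swap
  have hswap : (∑' k, ∫ t in Set.Ioc (0:ℝ) 1, F k t)
      = ∫ t in Set.Ioc (0:ℝ) 1, ∑' k, F k t :=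
    integral_tsum_of_summable_integral_norm hFint hsummable_int
  -- pointwise identity
  have hpoint : ∀ t ∈ Set.Ioc (0:ℝ) 1,
      (∑' k, F k t) = t ^ (1-a) * (1-t) ^ (a-1) * (1 - l*t) ^ (-1-a) := by
    intro t ht
    rw [Set.mem_Ioc] at ht
    have hX0 : 0 ≤ l * t := mul_nonneg hl0 ht.1.le
    have hX1 : l * t < 1 := lt_of_le_of_lt (mul_le_of_le_one_right hl0 ht.2) hl1
    have hbinom := binom_series ha0 ha1 hX0 hX1
    have hterm : ∀ k, F k t
        = (t ^ (1-a) * (1-t) ^ (a-1)) * (b k * (l*t)^k) := by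
      intro k
      rw [hFdef]
      simp only
      have he : ((2-a+(k:ℝ))-1) = (1-a) + (k:ℝ) := by ring
      rw [he, Real.rpow_add ht.1, Real.rpow_natCast, mul_pow]
      ring
    calc (∑' k, F k t) = ∑' k, (t ^ (1-a) * (1-t) ^ (a-1)) * (b k * (l*t)^k) :=
          tsum_congr hterm
      _ = (t ^ (1-a) * (1-t) ^ (a-1)) * ∑' k, b k * (l*t)^k := tsum_mul_left
      _ = t ^ (1-a) * (1-t) ^ (a-1) * (1 - l*t) ^ (-1-a) := by
          rw [hbdef] at *
          rw [hbinom]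
  constructor
  · -- integrability
    have h1 := real_beta_integrable (u := 2-a) (v := a) (by linarith) ha0
    have h1' : IntervalIntegrable (fun t : ℝ => t ^ (1-a) * (1-t) ^ (a-1))
        MeasureTheory.volume 0 1 := by
      have he : ((2-a:ℝ)-1) = 1-a := by ring
      rw [he] at h1
      exact h1
    apply h1'.mul_continuousOn
    apply ContinuousOn.rpow_const
    · exact (continuousOn_const.sub ((continuous_const.mul continuous_id).continuousOn))
    · intro t ht
      rw [Set.uIcc_of_le zero_le_one, Set.mem_Icc] at ht
      left
      have : l * t ≤ l := mul_le_of_le_one_right hl0 ht.2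
      intro hcontra
      have h2 : l * t < 1 := lt_of_le_of_lt this hl1
      linarith [hcontra, h2]
  · -- the value
    rw [intervalIntegral.integral_of_le zero_le_one]
    rw [← setIntegral_congr_fun measurableSet_Ioc hpoint]
    rw [← hswap]
    rw [hderiv, hshift, ← tsum_mul_left]
    exact tsum_congr hFval
end

section
/- Let K be a field of characteristic zero, N ≥ 2 an integer, and suppose K contains a primitive N-th root of unity; let μ_N ⊂ K^× be the group of N-th roots of unity. Let ℓ : K^× → (K, +) be a group homomorphism that vanishes on every element of finite order of K^×. Then for every integer n: 2·ℓ(N) − (1/2)·Σ_{ε ∈ μ_N, ε ≠ 1} (ε^n + ε^{−n})·ℓ((1−ε)(1−ε^{−1})) = 2·Σ_{ε ∈ μ_N, ε ≠ 1} (1 − ε^{−n})·ℓ(1−ε), where ℓ(N) means ℓ applied to the unit N·1_K. (This is the equality of the two displayed expressions for the constant κ_n^{(p)} in the paper, where ℓ = log^{(p)} on W(𝔽̄_p)^× vanishes on roots of unity.) -/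
open Finset Polynomial

theorem prod_one_sub_nthRoots (K : Type*) [Field K] [CharZero K] [DecidableEq K]
    (N : ℕ) (hN : 2 ≤ N) (ζ : K) (hζ : IsPrimitiveRoot ζ N) :
    ∏ ε ∈ (Polynomial.nthRootsFinset N (1 : K)).erase 1, (1 - ε) = (N : K) := by
  obtain ⟨m, rfl⟩ : ∃ m, N = m + 1 := ⟨N - 1, by omega⟩
  have himg : (nthRootsFinset (m+1) (1 : K)) = (range (m+1)).image (ζ ^ ·) := by
    refine (Finset.eq_of_subset_of_card_le ?_ ?_).symm
    · intro x hx
      obtain ⟨k, hk, rfl⟩ := Finset.mem_image.mp hx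
      rw [mem_nthRootsFinset (Nat.succ_pos m) (1 : K), ← pow_mul, mul_comm, pow_mul, hζ.pow_eq_one,
        one_pow]
    · rw [hζ.card_nthRootsFinset, Finset.card_image_of_injOn, card_range]
      intro i hi j hj h
      exact hζ.pow_inj (mem_range.mp hi) (mem_range.mp hj) h
  have herase : (nthRootsFinset (m+1) (1 : K)).erase 1 = (range m).image (fun k => ζ ^ (k+1)) := by
    ext x
    simp only [Finset.mem_erase, himg, Finset.mem_image, mem_range]
    constructor
    · rintro ⟨hx1, k, hk, rfl⟩
      have hk0 : k ≠ 0 := by rintro rfl; exact hx1 (pow_zero ζ)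
      exact ⟨k - 1, by omega, by rw [Nat.sub_add_cancel (Nat.one_le_iff_ne_zero.mpr hk0)]⟩
    · rintro ⟨k, hk, rfl⟩
      refine ⟨?_, k + 1, by omega, rfl⟩
      intro h
      have := hζ.pow_inj (by omega : k + 1 < m + 1) (by omega : 0 < m + 1)
        (by rw [h, pow_zero])
      omega
  have hinj : ∀ i ∈ range m, ∀ j ∈ range m, ζ ^ (i+1) = ζ ^ (j+1) → i = j := by
    intro i hi j hj h
    have := hζ.pow_inj (by simpa using mem_range.mp hi) (by simpa using mem_range.mp hj) h
    omega
  rw [herase, Finset.prod_image hinj]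
  have := hζ.prod_one_sub_pow_eq_order
  push_cast at this ⊢
  exact this

theorem ell_prod {K : Type*} [Field K] {α : Type*} (ℓ : K → K)
    (hhom : ∀ x y : K, x ≠ 0 → y ≠ 0 → ℓ (x * y) = ℓ x + ℓ y) (hL1 : ℓ 1 = 0)
    (s : Finset α) (f : α → K) (hf : ∀ a ∈ s, f a ≠ 0) :
    ℓ (∏ a ∈ s, f a) = ∑ a ∈ s, ℓ (f a) := by
  induction s using Finset.cons_induction with
  | empty => simpa
  | cons a s ha ih =>
    rw [Finset.prod_cons, Finset.sum_cons,
      hhom _ _ (hf a (Finset.mem_cons_self a s))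
        (Finset.prod_ne_zero_iff.mpr fun b hb => hf b (Finset.mem_cons_of_mem hb)),
      ih fun b hb => hf b (Finset.mem_cons_of_mem hb)]

/-- The equality of the two expressions for the constant `κ_n^{(p)}`: for a homomorphism
`ℓ` from `K^×` to `(K,+)` vanishing on elements of finite order, and `μ_N` the `N`-th roots
of unity in `K`,
`2ℓ(N) - ½ Σ_{ε∈μ_N, ε≠1} (ε^n + ε^{-n}) ℓ((1-ε)(1-ε⁻¹)) = 2 Σ_{ε∈μ_N, ε≠1} (1-ε^{-n}) ℓ(1-ε)`. -/
theorem kappa_two_expressions (K : Type*) [Field K] [CharZero K] [DecidableEq K]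
    (N : ℕ) (hN : 2 ≤ N) (ζ : K) (hζ : IsPrimitiveRoot ζ N)
    (ℓ : K → K)
    (hhom : ∀ x y : K, x ≠ 0 → y ≠ 0 → ℓ (x * y) = ℓ x + ℓ y)
    (hfin : ∀ x : K, (∃ m : ℕ, 0 < m ∧ x ^ m = 1) → ℓ x = 0)
    (n : ℤ) :
    2 * ℓ (N : K) - (1 / 2 : K) *
        ∑ ε ∈ (Polynomial.nthRootsFinset N (1 : K)).erase 1,
          (ε ^ n + ε ^ (-n)) * ℓ ((1 - ε) * (1 - ε⁻¹))
      = 2 * ∑ ε ∈ (Polynomial.nthRootsFinset N (1 : K)).erase 1,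
          (1 - ε ^ (-n)) * ℓ (1 - ε) := by
  classical
  set S := (Polynomial.nthRootsFinset N (1 : K)).erase 1 with hSdef
  have hN0 : 0 < N := by omega
  have hmemS : ∀ ε ∈ S, ε ^ N = 1 ∧ ε ≠ 1 ∧ ε ≠ 0 := by
    intro ε hε
    obtain ⟨h1, h2⟩ := Finset.mem_erase.mp hε
    exact ⟨(Polynomial.mem_nthRootsFinset hN0 (1 : K)).mp h2, h1,
      Polynomial.ne_zero_of_mem_nthRootsFinset one_ne_zero h2⟩
  have hsub : ∀ ε ∈ S, (1 : K) - ε ≠ 0 := by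
    intro ε hε h
    exact (hmemS ε hε).2.1 (by linear_combination -h)
  have hinvS : ∀ ε ∈ S, ε⁻¹ ∈ S := by
    intro ε hε
    obtain ⟨hpow, hne1, hne0⟩ := hmemS ε hε
    refine Finset.mem_erase.mpr ⟨fun h => hne1 (by rw [← inv_inv ε, h, inv_one]), ?_⟩
    rw [Polynomial.mem_nthRootsFinset hN0 (1 : K), inv_pow, hpow, inv_one]
  have hL1 : ℓ 1 = 0 := hfin 1 ⟨1, one_pos, one_pow 1⟩
  have hLinv : ∀ ε ∈ S, ℓ (1 - ε⁻¹) = ℓ (1 - ε) := by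
    intro ε hε
    obtain ⟨hpow, hne1, hne0⟩ := hmemS ε hε
    have heq : (1 : K) - ε⁻¹ = -ε⁻¹ * (1 - ε) := by field_simp; ring
    rw [heq, hhom _ _ (by simp [hne0]) (hsub ε hε)]
    have h0 : ℓ (-ε⁻¹) = 0 := by
      apply hfin
      refine ⟨2 * N, by omega, ?_⟩
      rw [pow_mul, neg_sq, inv_pow, inv_pow, ← pow_mul, mul_comm 2 N, pow_mul, hpow,
        one_pow, inv_one]
    rw [h0, zero_add]
  have hprod : ℓ (N : K) = ∑ ε ∈ S, ℓ (1 - ε) := by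
    rw [← prod_one_sub_nthRoots K N hN ζ hζ]
    exact ell_prod ℓ hhom hL1 S _ hsub
  have hmul : ∀ ε ∈ S, ℓ ((1 - ε) * (1 - ε⁻¹)) = 2 * ℓ (1 - ε) := by
    intro ε hε
    rw [hhom _ _ (hsub ε hε) (hsub ε⁻¹ (hinvS ε hε)), hLinv ε hε]
    ring
  have hsym : ∑ ε ∈ S, ε ^ n * ℓ (1 - ε) = ∑ ε ∈ S, ε ^ (-n) * ℓ (1 - ε) := by
    refine Finset.sum_nbij' (fun ε => ε⁻¹) (fun ε => ε⁻¹)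
      (fun ε hε => hinvS ε hε) (fun ε hε => hinvS ε hε)
      (fun ε _ => inv_inv ε) (fun ε _ => inv_inv ε) ?_
    intro ε hε
    rw [hLinv ε hε, inv_zpow, ← zpow_neg, neg_neg]
  have hmain : ∑ ε ∈ S, (ε ^ n + ε ^ (-n)) * ℓ ((1 - ε) * (1 - ε⁻¹))
      = (∑ ε ∈ S, ε ^ n * ℓ (1 - ε)) * 2 + (∑ ε ∈ S, ε ^ (-n) * ℓ (1 - ε)) * 2 := by
    rw [Finset.sum_mul, Finset.sum_mul, ← Finset.sum_add_distrib]
    exact Finset.sum_congr rfl fun ε hε => by rw [hmul ε hε]; ring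
  have hrhs : ∑ ε ∈ S, (1 - ε ^ (-n)) * ℓ (1 - ε)
      = (∑ ε ∈ S, ℓ (1 - ε)) - ∑ ε ∈ S, ε ^ (-n) * ℓ (1 - ε) := by
    rw [← Finset.sum_sub_distrib]
    exact Finset.sum_congr rfl fun ε hε => by ring
  rw [hprod, hmain, hrhs]
  linear_combination -hsym
end
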